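/- Let (Y, Σ, P) be a probability space, G a finite group, O a finite set, Φ : Y → Y a measurable map, and ψ : Y → ℂ^O a measurable map with each component ψ_o and each ψ_o ∘ Φ square-integrable with respect to P. Assume (A1) G acts measurably on Y from the left and acts freely on O from the right; (A2) ψ_o(g·y) = ψ_{o·g}(y) for all g ∈ G, o ∈ O, y ∈ Y; (A3) Φ(g·y) = g·Φ(y) for all g ∈ G, y ∈ Y; (A4) P is invariant under the action, i.e., the pushforward of P under y ↦ g·y equals P for all g ∈ G. Define the loss ℓ(K) := ∫_Y ‖K ψ(y) − ψ(Φ(y))‖² dP(y) for K ∈ ℂ^{O×O}. Then for every K ∈ ℂ^{O×O} there exists an equivariant matrix K' ∈ ℂ^{O×O} (i.e., K'_{o,o'} = K'_{o·g, o'·g} for all g, o, o') with ℓ(K') ≤ ℓ(K). -/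

import Mathlib

open MeasureTheory

/-- The EDMD loss `ℓ(K) = ∫_Y ‖K ψ(y) − ψ(Φ(y))‖² dP(y)`, with the Euclidean
norm on `ℂ^O` written as `∑_o ‖·‖²`. -/
noncomputable def edmdLoss {Y O : Type*} [MeasurableSpace Y] [Fintype O]
    (P : Measure Y) (Φ : Y → Y) (ψ : Y → O → ℂ) (K : Matrix O O ℂ) : ℝ :=
  ∫ y, ∑ o : O, ‖K.mulVec (ψ y) o - ψ (Φ y) o‖ ^ 2 ∂P

/-- **Theorem 3.1 of the paper.** Let `(Y, Σ, P)` be a probability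
space, `G` a finite group, `O` a finite set, `Φ : Y → Y` measurable, and
`ψ : Y → ℂ^O` measurable with each `ψ_o` and `ψ_o ∘ Φ` square-integrable.  Assume
(A1) `G` acts measurably on `Y` from the left and freely on `O` from the right;
(A2) `ψ_o(g·y) = ψ_{o·g}(y)`; (A3) `Φ(g·y) = g·Φ(y)`; (A4) the pushforward of `P`
under `y ↦ g·y` equals `P`.  Then for every `K ∈ ℂ^{O×O}` there exists an
equivariant matrix `K'` with `ℓ(K') ≤ ℓ(K)`. -/
theorem stmt12 {Y : Type*} [MeasurableSpace Y] (P : Measure Y) [IsProbabilityMeasure P]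
    {G : Type*} [Group G] [Fintype G]
    {O : Type*} [Fintype O]
    (actY : G → Y → Y)
    (hY1 : ∀ y, actY 1 y = y)
    (hY2 : ∀ g h y, actY g (actY h y) = actY (g * h) y)
    (hYmeas : ∀ g, Measurable (actY g))
    (actO : O → G → O)
    (hO1 : ∀ o, actO o 1 = o)
    (hO2 : ∀ o g h, actO (actO o g) h = actO o (g * h))
    (hOfree : ∀ o g, actO o g = o → g = 1)
    (Φ : Y → Y) (hΦmeas : Measurable Φ)
    (ψ : Y → O → ℂ)
    (hψmeas : ∀ o, Measurable fun y => ψ y o)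
    (hψL2 : ∀ o, MemLp (fun y => ψ y o) 2 P)
    (hψΦL2 : ∀ o, MemLp (fun y => ψ (Φ y) o) 2 P)
    (hA2 : ∀ g o y, ψ (actY g y) o = ψ y (actO o g))
    (hA3 : ∀ g y, Φ (actY g y) = actY g (Φ y))
    (hA4 : ∀ g, Measure.map (actY g) P = P)
    (K : Matrix O O ℂ) :
    ∃ K' : Matrix O O ℂ,
      (∀ (g : G) (o o' : O), K' o o' = K' (actO o g) (actO o' g)) ∧
      edmdLoss P Φ ψ K' ≤ edmdLoss P Φ ψ K := by
  classical
  have hnpos : 0 < ((Fintype.card G : ℕ) : ℝ) := by positivity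
  -- the conjugated matrices
  set σ : G → Matrix O O ℂ := fun g => Matrix.of (fun o o' => K (actO o g) (actO o' g)) with hσ
  set K' : Matrix O O ℂ := ((Fintype.card G : ℕ) : ℂ)⁻¹ • ∑ g : G, σ g with hK'
  -- the integrand for a general matrix
  set f : Matrix O O ℂ → Y → ℝ :=
    fun A y => ∑ o : O, ‖A.mulVec (ψ y) o - ψ (Φ y) o‖ ^ 2 with hf
  have hloss : ∀ A, edmdLoss P Φ ψ A = ∫ y, f A y ∂P := fun A => rfl
  -- integrability of the integrand
  have hint : ∀ A : Matrix O O ℂ, Integrable (f A) P := by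
    intro A
    apply integrable_finset_sum
    intro o _
    have hmem : MemLp (fun y => A.mulVec (ψ y) o - ψ (Φ y) o) 2 P := by
      have h1 : MemLp (fun y => ∑ o' : O, A o o' * ψ y o') 2 P :=
        memLp_finset_sum _ fun o' _ => (hψL2 o').const_mul (A o o')
      have : (fun y => A.mulVec (ψ y) o) = fun y => ∑ o' : O, A o o' * ψ y o' := by
        funext y; simp [Matrix.mulVec, dotProduct]
      exact (this ▸ h1).sub (hψΦL2 o)
    exact hmem.norm.integrable_sq
  -- measurability of the integrand
  have hmeasf : ∀ A : Matrix O O ℂ, Measurable (f A) := by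
    intro A
    apply Finset.measurable_sum
    intro o _
    have h1 : Measurable (fun y => A.mulVec (ψ y) o) := by
      have : (fun y => A.mulVec (ψ y) o) = fun y => ∑ o' : O, A o o' * ψ y o' := by
        funext y; simp [Matrix.mulVec, dotProduct]
      rw [this]
      exact Finset.measurable_sum _ fun o' _ => (hψmeas o').const_mul (A o o')
    exact ((h1.sub ((hψmeas o).comp hΦmeas)).norm.pow_const 2)
  -- the reindexing bijection on O
  have eO : ∀ g : G, Function.Bijective (fun o => actO o g) := by
    intro g
    have hinv : ∀ o, actO (actO o g) g⁻¹ = o := fun o => by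
      rw [hO2, mul_inv_cancel, hO1]
    have hinv' : ∀ o, actO (actO o g⁻¹) g = o := fun o => by
      rw [hO2, inv_mul_cancel, hO1]
    exact Function.bijective_iff_has_inverse.2 ⟨fun o => actO o g⁻¹, hinv, hinv'⟩
  -- invariance of the loss
  have hinvloss : ∀ g : G, ∫ y, f (σ g) y ∂P = ∫ y, f K y ∂P := by
    intro g
    have key : ∀ y, f (σ g) y = f K (actY g⁻¹ y) := by
      intro y
      set z := actY g⁻¹ y with hz
      have hyz : actY g z = y := by rw [hz, hY2, mul_inv_cancel, hY1]
      have hψy : ∀ o' : O, ψ y o' = ψ z (actO o' g) := by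
        intro o'; rw [← hyz, hA2]
      have hψΦy : ∀ o : O, ψ (Φ y) o = ψ (Φ z) (actO o g) := by
        intro o; rw [← hyz, hA3, hA2]
      have hmv : ∀ o : O, (σ g).mulVec (ψ y) o = K.mulVec (ψ z) (actO o g) := by
        intro o
        simp only [Matrix.mulVec, dotProduct, hσ, Matrix.of_apply]
        rw [← (Equiv.ofBijective _ (eO g)).sum_comp (fun o'' => K (actO o g) o'' * ψ z o'')]
        exact Finset.sum_congr rfl fun o' _ => by rw [hψy o']; rfl
      have : f (σ g) y = ∑ o : O, ‖K.mulVec (ψ z) (actO o g) - ψ (Φ z) (actO o g)‖ ^ 2 := by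
        simp only [hf]
        exact Finset.sum_congr rfl fun o _ => by rw [hmv o, hψΦy o]
      rw [this, hf]
      exact (Equiv.ofBijective _ (eO g)).sum_comp
        (fun o => ‖K.mulVec (ψ z) o - ψ (Φ z) o‖ ^ 2)
    calc ∫ y, f (σ g) y ∂P = ∫ y, f K (actY g⁻¹ y) ∂P := by
          exact integral_congr_ae (Filter.Eventually.of_forall key)
      _ = ∫ y, f K y ∂(Measure.map (actY g⁻¹) P) := by
          rw [integral_map (hYmeas g⁻¹).aemeasurable
            ((hmeasf K).aestronglyMeasurable.mono_ac (by rw [hA4]))]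
      _ = ∫ y, f K y ∂P := by rw [hA4]
  -- pointwise convexity bound
  have hpt : ∀ y, f K' y ≤ ((Fintype.card G : ℕ) : ℝ)⁻¹ * ∑ g : G, f (σ g) y := by
    intro y
    have hdecomp : ∀ o : O, K'.mulVec (ψ y) o - ψ (Φ y) o
        = ((Fintype.card G : ℕ) : ℂ)⁻¹ * ∑ g : G, ((σ g).mulVec (ψ y) o - ψ (Φ y) o) := by
      intro o
      have h1 : K'.mulVec (ψ y) o = ((Fintype.card G : ℕ) : ℂ)⁻¹ * ∑ g : G, (σ g).mulVec (ψ y) o := by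
        simp only [hK', Matrix.mulVec, dotProduct, Matrix.smul_apply,
          Matrix.sum_apply, smul_eq_mul, Finset.mul_sum, Finset.sum_mul]
        rw [Finset.sum_comm]
        exact Finset.sum_congr rfl fun g _ => Finset.sum_congr rfl fun o' _ => mul_assoc _ _ _
      have hψc : ψ (Φ y) o = ((Fintype.card G : ℕ) : ℂ)⁻¹ * ∑ _g : G, ψ (Φ y) o := by
        rw [Finset.sum_const, Finset.card_univ, nsmul_eq_mul, ← mul_assoc,
          inv_mul_cancel₀ (by exact_mod_cast hnpos.ne'), one_mul]
      rw [h1, Finset.sum_sub_distrib, mul_sub]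
      nth_rewrite 1 [hψc]
      rfl
    have hbound : ∀ o : O, ‖K'.mulVec (ψ y) o - ψ (Φ y) o‖ ^ 2
        ≤ ((Fintype.card G : ℕ) : ℝ)⁻¹ * ∑ g : G, ‖(σ g).mulVec (ψ y) o - ψ (Φ y) o‖ ^ 2 := by
      intro o
      set w : G → ℂ := fun g => (σ g).mulVec (ψ y) o - ψ (Φ y) o with hw
      rw [hdecomp o]
      have h2 : ‖((Fintype.card G : ℕ) : ℂ)⁻¹ * ∑ g : G, w g‖ ^ 2 = ((Fintype.card G : ℕ) : ℝ)⁻¹ ^ 2 * ‖∑ g : G, w g‖ ^ 2 := by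
        rw [norm_mul, mul_pow]
        norm_num
      rw [h2]
      have h3 : ‖∑ g : G, w g‖ ^ 2 ≤ ((Fintype.card G : ℕ) : ℝ) * ∑ g : G, ‖w g‖ ^ 2 := by
        calc ‖∑ g : G, w g‖ ^ 2 ≤ (∑ g : G, ‖w g‖) ^ 2 := by
              apply pow_le_pow_left₀ (norm_nonneg _) (norm_sum_le _ _)
          _ ≤ (Finset.univ.card : ℝ) * ∑ g : G, ‖w g‖ ^ 2 := sq_sum_le_card_mul_sum_sq
          _ = ((Fintype.card G : ℕ) : ℝ) * ∑ g : G, ‖w g‖ ^ 2 := by rw [Finset.card_univ]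
      calc ((Fintype.card G : ℕ) : ℝ)⁻¹ ^ 2 * ‖∑ g : G, w g‖ ^ 2
          ≤ ((Fintype.card G : ℕ) : ℝ)⁻¹ ^ 2 * (((Fintype.card G : ℕ) : ℝ) * ∑ g : G, ‖w g‖ ^ 2) :=
            mul_le_mul_of_nonneg_left h3 (by positivity)
        _ = ((Fintype.card G : ℕ) : ℝ)⁻¹ * ∑ g : G, ‖w g‖ ^ 2 := by
            field_simp
    calc f K' y ≤ ∑ o : O, ((Fintype.card G : ℕ) : ℝ)⁻¹ * ∑ g : G, ‖(σ g).mulVec (ψ y) o - ψ (Φ y) o‖ ^ 2 :=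
          Finset.sum_le_sum fun o _ => hbound o
      _ = ((Fintype.card G : ℕ) : ℝ)⁻¹ * ∑ g : G, f (σ g) y := by
          rw [← Finset.mul_sum, Finset.sum_comm]
  refine ⟨K', ?_, ?_⟩
  · -- equivariance
    intro g o o'
    simp only [hK', Matrix.smul_apply, Matrix.sum_apply, hσ, Matrix.of_apply, smul_eq_mul]
    congr 1
    exact Fintype.sum_equiv (Equiv.mulLeft g⁻¹) (fun h => K (actO o h) (actO o' h))
      (fun h => K (actO (actO o g) h) (actO (actO o' g) h))
      (fun h => by simp only [Equiv.coe_mulLeft, hO2, mul_inv_cancel_left])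
  · -- loss inequality
    rw [hloss, hloss]
    calc ∫ y, f K' y ∂P ≤ ∫ y, ((Fintype.card G : ℕ) : ℝ)⁻¹ * ∑ g : G, f (σ g) y ∂P := by
          apply integral_mono (hint K')
          · exact (integrable_finset_sum _ fun g _ => hint (σ g)).const_mul _
          · exact hpt
      _ = ((Fintype.card G : ℕ) : ℝ)⁻¹ * ∑ g : G, ∫ y, f (σ g) y ∂P := by
          rw [integral_const_mul, integral_finset_sum _ fun g _ => hint (σ g)]
      _ = ((Fintype.card G : ℕ) : ℝ)⁻¹ * ∑ _g : G, ∫ y, f K y ∂P := by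
          rw [Finset.sum_congr rfl fun g _ => hinvloss g]
      _ = ∫ y, f K y ∂P := by
          rw [Finset.sum_const, Finset.card_univ, nsmul_eq_mul, ← mul_assoc,
            inv_mul_cancel₀ hnpos.ne', one_mul]
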